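/- Let G(x) = sin(π(i−x))/sin(π(i+x)). There is a constant C > 0 such that |1 − G(x)| ≤ C·min{1, |x|} for every complex x with Im x ≥ 0. Consequently, for every complex x with Im x ≥ 0 the infinite product Δ(x) = ∏_{j ≥ 1} G(2^{−j} x) converges, and Δ(2^n x) → 1 as the integer n → −∞. -/

import Mathlib

open Complex Real Filter

/-- With `G(x) = sin(π(i−x))/sin(π(i+x))`, there is `C > 0` with
`|1 − G(x)| ≤ C·min{1,|x|}` on the closed upper half plane; consequently, for `Im x ≥ 0` the
product `Δ(x) = ∏_{j≥1} G(2^{−j}x)` converges, and `Δ(2^n x) → 1` as `n → −∞`. -/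
private lemma abs_sin_sq (z : ℂ) :
    ‖Complex.sin z‖ ^ 2 = Real.sin z.re ^ 2 + Real.sinh z.im ^ 2 := by
  rw [Complex.sq_norm, Complex.sin_eq,
    ← Complex.ofReal_sin, ← Complex.ofReal_cos, ← Complex.ofReal_sinh, ← Complex.ofReal_cosh,
    ← Complex.ofReal_mul, ← Complex.ofReal_mul, Complex.normSq_add_mul_I]
  nlinarith [Real.sin_sq_add_cos_sq z.re, Real.cosh_sq z.im]

private lemma abs_cos_sq (z : ℂ) :
    ‖Complex.cos z‖ ^ 2 = Real.cos z.re ^ 2 + Real.sinh z.im ^ 2 := by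
  rw [Complex.sq_norm, Complex.cos_eq,
    ← Complex.ofReal_sin, ← Complex.ofReal_cos, ← Complex.ofReal_sinh, ← Complex.ofReal_cosh,
    ← Complex.ofReal_mul, ← Complex.ofReal_mul, sub_eq_add_neg, neg_mul_eq_neg_mul, ← Complex.ofReal_neg,
    Complex.normSq_add_mul_I]
  nlinarith [Real.sin_sq_add_cos_sq z.re, Real.cosh_sq z.im]

private lemma im_den (x : ℂ) : ((π : ℂ) * (I + x)).im = π * (1 + x.im) := by
  simp [Complex.mul_im]

private lemma re_den (x : ℂ) : ((π : ℂ) * (I + x)).re = π * x.re := by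
  simp [Complex.mul_re]

private lemma im_num (x : ℂ) : ((π : ℂ) * (I - x)).im = π * (1 - x.im) := by
  simp [Complex.mul_im]

private lemma re_num (x : ℂ) : ((π : ℂ) * (I - x)).re = -(π * x.re) := by
  simp [Complex.mul_re]

private lemma den_lb {x : ℂ} (hx : 0 ≤ x.im) :
    Real.sinh π ≤ ‖Complex.sin ((π : ℂ) * (I + x))‖ := by
  have h := abs_sin_sq ((π : ℂ) * (I + x))
  rw [im_den, re_den] at h
  have h1 : Real.sinh π ≤ Real.sinh (π * (1 + x.im)) := by
    rw [Real.sinh_le_sinh]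
    nlinarith [Real.pi_pos]
  have h2 : 0 < Real.sinh π := Real.sinh_pos_iff.2 Real.pi_pos
  nlinarith [norm_nonneg (Complex.sin ((π : ℂ) * (I + x))), sq_nonneg (Real.sin (π * x.re))]

private lemma den_ne {x : ℂ} (hx : 0 ≤ x.im) : Complex.sin ((π : ℂ) * (I + x)) ≠ 0 := by
  have := den_lb hx
  have h2 : 0 < Real.sinh π := Real.sinh_pos_iff.2 Real.pi_pos
  intro h
  rw [h] at this
  simp at this
  linarith [Real.pi_pos]

private lemma num_le_den {x : ℂ} (hx : 0 ≤ x.im) :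
    ‖Complex.sin ((π : ℂ) * (I - x))‖ ≤ ‖Complex.sin ((π : ℂ) * (I + x))‖ := by
  have h1 := abs_sin_sq ((π : ℂ) * (I + x))
  have h2 := abs_sin_sq ((π : ℂ) * (I - x))
  rw [im_den, re_den] at h1
  rw [im_num, re_num] at h2
  rw [Real.sin_neg] at h2
  have hc : Real.cosh (π * (1 - x.im)) ≤ Real.cosh (π * (1 + x.im)) := by
    rw [Real.cosh_le_cosh]
    have := Real.pi_pos
    rw [abs_le]
    constructor <;> [skip; skip] <;>
      cases abs_cases (π * (1 + x.im)) <;> nlinarith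
  have hs : Real.sinh (π * (1 - x.im)) ^ 2 ≤ Real.sinh (π * (1 + x.im)) ^ 2 := by
    have e1 := Real.cosh_sq (π * (1 - x.im))
    have e2 := Real.cosh_sq (π * (1 + x.im))
    nlinarith [Real.cosh_pos (x := π * (1 - x.im)), Real.cosh_pos (x := π * (1 + x.im))]
  nlinarith [norm_nonneg (Complex.sin ((π : ℂ) * (I + x))),
    norm_nonneg (Complex.sin ((π : ℂ) * (I - x)))]

private lemma one_sub_frac {x : ℂ} (hden : Complex.sin ((π : ℂ) * (I + x)) ≠ 0) :
    1 - Complex.sin ((π : ℂ) * (I - x)) / Complex.sin ((π : ℂ) * (I + x))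
      = 2 * Complex.cos ((π : ℂ) * I) * Complex.sin ((π : ℂ) * x)
          / Complex.sin ((π : ℂ) * (I + x)) := by
  have e1 : (π : ℂ) * (I + x) = (π : ℂ) * I + (π : ℂ) * x := by ring
  have e2 : (π : ℂ) * (I - x) = (π : ℂ) * I - (π : ℂ) * x := by ring
  rw [e2, eq_div_iff hden, sub_mul, one_mul, div_mul_cancel₀ _ hden, e1,
    Complex.sin_add, Complex.sin_sub]
  ring

private lemma cos_bd {z : ℂ} (hz : ‖z‖ ≤ π) : ‖Complex.cos z‖ ≤ Real.cosh π := by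
  have h := abs_cos_sq z
  have h1 : |z.im| ≤ π := le_trans (Complex.abs_im_le_norm z) hz
  have h2 : Real.cosh z.im ≤ Real.cosh π := by
    rw [Real.cosh_le_cosh]
    rwa [abs_of_pos Real.pi_pos]
  have e1 := Real.cosh_sq z.im
  have e2 := Real.cosh_sq π
  nlinarith [norm_nonneg (Complex.cos z), Real.cosh_pos (x := z.im), Real.cosh_pos (x := π),
    Real.sin_sq_add_cos_sq z.re, sq_nonneg (Real.sin z.re)]

private lemma sin_lip {w : ℂ} (hw : ‖w‖ ≤ π) :
    ‖Complex.sin w‖ ≤ Real.cosh π * ‖w‖ := by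
  have h := Convex.norm_image_sub_le_of_norm_hasDerivWithin_le
    (f := Complex.sin) (f' := Complex.cos) (s := Metric.closedBall (0 : ℂ) π)
    (C := Real.cosh π)
    (fun z _ => (Complex.hasDerivAt_sin z).hasDerivWithinAt)
    (fun z hz => cos_bd (by simpa [Metric.mem_closedBall, dist_eq_norm] using hz))
    (convex_closedBall _ _)
    (Metric.mem_closedBall_self Real.pi_pos.le)
    (by simpa [Metric.mem_closedBall, dist_eq_norm] using hw)
  simpa using h

private lemma key_bound {G : ℂ → ℂ}
    (hG : ∀ x : ℂ, G x = Complex.sin ((π : ℂ) * (I - x)) / Complex.sin ((π : ℂ) * (I + x)))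
    {x : ℂ} (hx : 0 ≤ x.im) :
    ‖1 - G x‖ ≤ (2 * π * Real.cosh π ^ 2 / Real.sinh π) * min 1 ‖x‖ := by
  have hsinh : 0 < Real.sinh π := Real.sinh_pos_iff.2 Real.pi_pos
  have hcosh : 0 < Real.cosh π := Real.cosh_pos π
  have hden := den_lb hx
  have hdenne := den_ne hx
  have hcos : ‖Complex.cos ((π : ℂ) * I)‖ = Real.cosh π := by
    rw [Complex.cos_mul_I, ← Complex.ofReal_cosh, Complex.norm_real,
      Real.norm_eq_abs, abs_of_pos hcosh]
  rcases le_total ‖x‖ 1 with hx1 | hx1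
  · rw [min_eq_right hx1, hG x, one_sub_frac hdenne, norm_div, norm_mul, norm_mul, hcos]
    have hsin : ‖Complex.sin ((π : ℂ) * x)‖ ≤ Real.cosh π * (π * ‖x‖) := by
      have hw : ‖(π : ℂ) * x‖ = π * ‖x‖ := by
        rw [norm_mul, Complex.norm_real, Real.norm_eq_abs, abs_of_pos Real.pi_pos]
      have : ‖(π : ℂ) * x‖ ≤ π := by
        rw [hw]
        nlinarith [Real.pi_pos]
      have := sin_lip this
      rwa [hw] at this
    calc ‖(2 : ℂ)‖ * Real.cosh π * ‖Complex.sin ((π : ℂ) * x)‖ / ‖Complex.sin ((π : ℂ) * (I + x))‖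
        ≤ 2 * Real.cosh π * (Real.cosh π * (π * ‖x‖)) / Real.sinh π := by
          apply div_le_div₀ (by positivity) ?_ hsinh hden
          rw [Complex.norm_ofNat]
          nlinarith [norm_nonneg (Complex.sin ((π : ℂ) * x))]
      _ = (2 * π * Real.cosh π ^ 2 / Real.sinh π) * ‖x‖ := by ring
  · rw [min_eq_left hx1]
    have hG1 : ‖G x‖ ≤ 1 := by
      rw [hG x, norm_div]
      exact div_le_one_of_le₀ (num_le_den hx) (norm_nonneg _)
    have h2 : ‖1 - G x‖ ≤ 2 := by
      calc ‖1 - G x‖ ≤ ‖(1 : ℂ)‖ + ‖G x‖ := norm_sub_le _ _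
        _ ≤ 1 + 1 := by rw [norm_one]; linarith
        _ = 2 := by norm_num
    have hC2 : 2 ≤ 2 * π * Real.cosh π ^ 2 / Real.sinh π := by
      rw [le_div_iff₀ hsinh]
      have h3 : Real.sinh π < Real.cosh π := by
        nlinarith [Real.cosh_sub_sinh π, Real.exp_pos (-π)]
      nlinarith [Real.pi_gt_three, Real.one_le_cosh π]
    calc ‖1 - G x‖ ≤ 2 := h2
      _ ≤ (2 * π * Real.cosh π ^ 2 / Real.sinh π) * 1 := by rw [mul_one]; exact hC2

private lemma pow_two_eq (m : ℕ) : (2 : ℂ) ^ (-(m : ℤ) - 1) = (((2:ℝ) ^ (-(m:ℤ) - 1) : ℝ) : ℂ) := by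
  push_cast
  norm_num

private lemma scaled_im {x : ℂ} (hx : 0 ≤ x.im) (m : ℕ) :
    0 ≤ ((2 : ℂ) ^ (-(m : ℤ) - 1) * x).im := by
  rw [pow_two_eq]
  simp only [Complex.mul_im, Complex.ofReal_re, Complex.ofReal_im, zero_mul, add_zero]
  exact mul_nonneg (zpow_nonneg (by norm_num) _) hx

private lemma rpow_eq (m : ℕ) : (2 : ℝ) ^ (-(m : ℤ) - 1) = (2⁻¹ : ℝ) ^ (m + 1) := by
  have h : -(m : ℤ) - 1 = -((m + 1 : ℕ) : ℤ) := by push_cast; ring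
  rw [h, zpow_neg, zpow_natCast, ← inv_pow]

private lemma term_bound {G : ℂ → ℂ} {C : ℝ} (hC : 0 ≤ C)
    (key : ∀ y : ℂ, 0 ≤ y.im → ‖1 - G y‖ ≤ C * min 1 ‖y‖)
    {x : ℂ} (hx : 0 ≤ x.im) (m : ℕ) :
    ‖1 - G ((2 : ℂ) ^ (-(m : ℤ) - 1) * x)‖ ≤ (C * ‖x‖) * (2⁻¹ : ℝ) ^ m := by
  have h := key _ (scaled_im hx m)
  have hn : ‖(2 : ℂ) ^ (-(m : ℤ) - 1) * x‖ = (2⁻¹ : ℝ) ^ (m + 1) * ‖x‖ := by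
    rw [pow_two_eq, norm_mul, Complex.norm_real, Real.norm_eq_abs, rpow_eq,
      _root_.abs_of_nonneg (by positivity : (0:ℝ) ≤ (2⁻¹ : ℝ) ^ (m + 1))]
  calc ‖1 - G ((2 : ℂ) ^ (-(m : ℤ) - 1) * x)‖
      ≤ C * min 1 ‖(2 : ℂ) ^ (-(m : ℤ) - 1) * x‖ := h
    _ ≤ C * ‖(2 : ℂ) ^ (-(m : ℤ) - 1) * x‖ := by
        exact mul_le_mul_of_nonneg_left (min_le_right _ _) hC
    _ = C * ((2⁻¹ : ℝ) ^ (m + 1) * ‖x‖) := by rw [hn]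
    _ ≤ (C * ‖x‖) * (2⁻¹ : ℝ) ^ m := by
        rw [pow_succ]
        nlinarith [pow_nonneg (by norm_num : (0:ℝ) ≤ 2⁻¹) m, norm_nonneg x,
          mul_nonneg hC (norm_nonneg x)]

private lemma summable_log_tail {a : ℕ → ℂ} {D : ℝ}
    (hbnd : ∀ m : ℕ, ‖1 - a m‖ ≤ D * (2⁻¹ : ℝ) ^ m)
    (k : ℕ) (hk : ∀ m : ℕ, k ≤ m → ‖1 - a m‖ ≤ 1 / 2) :
    Summable fun j : ℕ => Complex.log (a (j + k)) := by
  have hD : 0 ≤ D := by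
    have := hbnd 0
    have := norm_nonneg (1 - a 0)
    simp only [pow_zero, mul_one] at *
    linarith
  apply Summable.of_norm_bounded (g := fun j : ℕ => (3 / 2 * D * (2⁻¹ : ℝ) ^ k) * (2⁻¹ : ℝ) ^ j)
  · exact (summable_geometric_of_lt_one (by norm_num) (by norm_num)).mul_left _
  · intro j
    have h1 : ‖1 - a (j + k)‖ ≤ 1 / 2 := hk _ (Nat.le_add_left k j)
    have he : a (j + k) = 1 + (a (j + k) - 1) := by ring
    calc ‖Complex.log (a (j + k))‖
        = ‖Complex.log (1 + (a (j + k) - 1))‖ := by rw [← he]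
      _ ≤ 3 / 2 * ‖a (j + k) - 1‖ :=
          Complex.norm_log_one_add_half_le_self (by rwa [norm_sub_rev])
      _ ≤ 3 / 2 * (D * (2⁻¹ : ℝ) ^ (j + k)) := by
          have := hbnd (j + k)
          rw [norm_sub_rev]
          linarith
      _ = (3 / 2 * D * (2⁻¹ : ℝ) ^ k) * (2⁻¹ : ℝ) ^ j := by rw [pow_add]; ring

private lemma hasProd_zero_of_eq_zero {a : ℕ → ℂ} {j0 : ℕ} (h0 : a j0 = 0) : HasProd a 0 := by
  have h : ∀ᶠ s : Finset ℕ in atTop, ∏ i ∈ s, a i = 0 := by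
    filter_upwards [Filter.eventually_ge_atTop ({j0} : Finset ℕ)] with s hs
    exact Finset.prod_eq_zero (hs (Finset.mem_singleton_self j0)) h0
  exact Filter.Tendsto.congr' (h.mono fun s hs => hs.symm) tendsto_const_nhds

private lemma mult_of_nonzero {a : ℕ → ℂ} (hnz : ∀ m, a m ≠ 0)
    (hsum : Summable fun m : ℕ => Complex.log (a m)) : Multipliable a :=
  Complex.multipliable_of_summable_log hsum

private lemma mult_main {G : ℂ → ℂ} {C : ℝ} (hC : 0 ≤ C)
    (key : ∀ y : ℂ, 0 ≤ y.im → ‖1 - G y‖ ≤ C * min 1 ‖y‖)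
    {x : ℂ} (hx : 0 ≤ x.im) :
    Multipliable (fun j : ℕ => G ((2 : ℂ) ^ (-(j : ℤ) - 1) * x)) := by
  set a : ℕ → ℂ := fun m => G ((2 : ℂ) ^ (-(m : ℤ) - 1) * x) with ha
  by_cases hzero : ∃ j0, a j0 = 0
  · obtain ⟨j0, h0⟩ := hzero
    exact ⟨0, hasProd_zero_of_eq_zero h0⟩
  · push_neg at hzero
    set D : ℝ := C * ‖x‖ + 1 with hD
    have hD0 : 0 < D := by positivity
    have hbnd : ∀ m, ‖1 - a m‖ ≤ D * (2⁻¹ : ℝ) ^ m := fun m =>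
      (term_bound hC key hx m).trans
        (by nlinarith [pow_nonneg (by norm_num : (0:ℝ) ≤ 2⁻¹) m])
    obtain ⟨N, hN⟩ := exists_pow_lt_of_lt_one
      (show (0:ℝ) < 1/2/D by positivity) (show (2⁻¹:ℝ) < 1 by norm_num)
    have hNm : ∀ m, N ≤ m → ‖1 - a m‖ ≤ 1/2 := by
      intro m hm
      have h1 : ((2:ℝ)⁻¹) ^ m ≤ (2⁻¹:ℝ) ^ N :=
        pow_le_pow_of_le_one (by norm_num) (by norm_num) hm
      have h2 := hbnd m
      have h3 : (2⁻¹:ℝ)^N < 1/2/D := hN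
      rw [lt_div_iff₀ hD0] at h3
      nlinarith [pow_nonneg (by norm_num : (0:ℝ) ≤ 2⁻¹) m]
    have hs0 : Summable fun j : ℕ => Complex.log (a (j + N)) :=
      summable_log_tail hbnd N hNm
    exact mult_of_nonzero hzero ((summable_nat_add_iff N).1 hs0)

private lemma tendsto_main {G : ℂ → ℂ} {C : ℝ} (hC : 0 ≤ C)
    (key : ∀ y : ℂ, 0 ≤ y.im → ‖1 - G y‖ ≤ C * min 1 ‖y‖)
    {x : ℂ} (hx : 0 ≤ x.im) :
    Tendsto (fun n : ℤ => ∏' j : ℕ, G ((2 : ℂ) ^ (-(j : ℤ) - 1) * ((2 : ℂ) ^ n * x)))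
      atBot (nhds 1) := by
  set a : ℕ → ℂ := fun m => G ((2 : ℂ) ^ (-(m : ℤ) - 1) * x) with ha
  set D : ℝ := C * ‖x‖ + 1 with hD
  have hD0 : 0 < D := by positivity
  have hbnd : ∀ m, ‖1 - a m‖ ≤ D * (2⁻¹ : ℝ) ^ m := fun m =>
    (term_bound hC key hx m).trans
      (by nlinarith [pow_nonneg (by norm_num : (0:ℝ) ≤ 2⁻¹) m])
  obtain ⟨N, hN⟩ := exists_pow_lt_of_lt_one
    (show (0:ℝ) < 1/2/D by positivity) (show (2⁻¹:ℝ) < 1 by norm_num)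
  have hNm : ∀ m, N ≤ m → ‖1 - a m‖ ≤ 1/2 := by
    intro m hm
    have h1 : ((2:ℝ)⁻¹) ^ m ≤ (2⁻¹:ℝ) ^ N :=
      pow_le_pow_of_le_one (by norm_num) (by norm_num) hm
    have h2 := hbnd m
    have h3 : (2⁻¹:ℝ)^N < 1/2/D := hN
    rw [lt_div_iff₀ hD0] at h3
    nlinarith [pow_nonneg (by norm_num : (0:ℝ) ≤ 2⁻¹) m]
  have hnz : ∀ m, N ≤ m → a m ≠ 0 := by
    intro m hm h0
    have h1 := hNm m hm
    rw [h0, sub_zero, norm_one] at h1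
    linarith
  have hP : ∀ k : ℕ, N ≤ k →
      (∏' j : ℕ, a (j + k)) = Complex.exp (∑' j : ℕ, Complex.log (a (j + k))) := by
    intro k hk
    have hsk : Summable fun j : ℕ => Complex.log (a (j + k)) :=
      summable_log_tail hbnd k (fun m hm => hNm m (hk.trans hm))
    have h2 := hsk.hasSum.cexp
    have hfe : (Complex.exp ∘ fun j : ℕ => Complex.log (a (j + k))) = fun j : ℕ => a (j + k) := by
      funext j
      exact Complex.exp_log (hnz _ (le_trans hk (Nat.le_add_left k j)))
    rw [hfe] at h2
    exact h2.tprod_eq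
  have hT : Tendsto (fun k : ℕ => ∑' j : ℕ, Complex.log (a (j + k))) atTop (nhds 0) :=
    tendsto_sum_nat_add (fun m => Complex.log (a m))
  have h1 : Tendsto (fun k : ℕ => ∏' j : ℕ, a (j + k)) atTop (nhds 1) := by
    have h2 : Tendsto (fun k : ℕ => Complex.exp (∑' j : ℕ, Complex.log (a (j + k))))
        atTop (nhds 1) := by
      have h3 := (Complex.continuous_exp.tendsto 0).comp hT
      simpa [Function.comp_def] using h3
    refine Filter.Tendsto.congr' ?_ h2
    filter_upwards [eventually_ge_atTop N] with k hk
    exact (hP k hk).symm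
  have hmap : Tendsto (fun n : ℤ => (-n).toNat) atBot atTop := by
    apply tendsto_atTop.2
    intro b
    filter_upwards [eventually_le_atBot (-(b:ℤ))] with n hn
    omega
  refine Filter.Tendsto.congr' ?_ (h1.comp hmap)
  filter_upwards [eventually_le_atBot (0:ℤ)] with n hn
  simp only [Function.comp]
  refine tprod_congr fun j => ?_
  have hk : (((-n).toNat : ℕ) : ℤ) = -n := Int.toNat_of_nonneg (by omega)
  show G _ = G _
  congr 1
  rw [← mul_assoc, ← zpow_add₀ (two_ne_zero : (2:ℂ) ≠ 0)]
  congr 1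
  push_cast [hk]
  ring


theorem delta_product_converges (G : ℂ → ℂ)
    (hG : ∀ x : ℂ, G x = Complex.sin ((π : ℂ) * (I - x)) / Complex.sin ((π : ℂ) * (I + x))) :
    ∃ C > (0 : ℝ),
      (∀ x : ℂ, 0 ≤ x.im → ‖1 - G x‖ ≤ C * min 1 ‖x‖) ∧
      (∀ x : ℂ, 0 ≤ x.im → Multipliable (fun j : ℕ => G ((2 : ℂ) ^ (-(j : ℤ) - 1) * x))) ∧
      (∀ x : ℂ, 0 ≤ x.im →
        Tendsto (fun n : ℤ =>
            ∏' j : ℕ, G ((2 : ℂ) ^ (-(j : ℤ) - 1) * ((2 : ℂ) ^ n * x)))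
          atBot (nhds 1)) := by
  refine ⟨2 * π * Real.cosh π ^ 2 / Real.sinh π, ?_, ?_, ?_, ?_⟩
  · have hsinh : 0 < Real.sinh π := Real.sinh_pos_iff.2 Real.pi_pos
    have hcosh : 0 < Real.cosh π := Real.cosh_pos π
    have := Real.pi_pos
    positivity
  · exact fun x hx => key_bound hG hx
  · intro x hx
    exact mult_main (by positivity) (fun y hy => key_bound hG hy) hx
  · intro x hx
    exact tendsto_main (by positivity) (fun y hy => key_bound hG hy) hx
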